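/- Let N = (S, C, R) be a chemical reaction network with deficiency δ and t terminal strong linkage classes. Then for each positive rate vector k ∈ ℝ^R_{>0}, dim Ker(Y ∘ A_k) ≤ δ + t, where Y is the map of complexes and A_k is the Laplacian map. -/

import Mathlib

open scoped BigOperators Classical

/-- A chemical reaction network (CRN) on a finite species set `S`:
complexes are non-negative vectors in `ℝ^S`, reactions are pairs of complexes,
no reaction is a self-loop, and every complex occurs in some reaction. -/
structure CRN (S : Type*) [Fintype S] where
  complexes : Finset (S → ℝ)
  reactions : Finset ((S → ℝ) × (S → ℝ))
  complexes_nonneg : ∀ y ∈ complexes, ∀ i, 0 ≤ y i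
  mem_source : ∀ r ∈ reactions, r.1 ∈ complexes
  mem_target : ∀ r ∈ reactions, r.2 ∈ complexes
  ne_of_mem : ∀ r ∈ reactions, r.1 ≠ r.2
  cover : ∀ y ∈ complexes, ∃ y', (y, y') ∈ reactions ∨ (y', y) ∈ reactions

namespace CRN

variable {S : Type*} [Fintype S] (N : CRN S)

/-- One-step reaction relation on complexes. -/
def step (y y' : S → ℝ) : Prop := (y, y') ∈ N.reactions

/-- Reachability along directed reactions. -/
def reach : (S → ℝ) → (S → ℝ) → Prop := Relation.ReflTransGen N.step

/-- A complex is terminal iff it belongs to a terminal strong linkage class,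
i.e. everything reachable from it can reach it back. -/
def IsTerminal (y : S → ℝ) : Prop :=
  y ∈ N.complexes ∧ ∀ y', N.reach y y' → N.reach y' y

/-- A nonterminal complex. -/
def Nonterminal (y : S → ℝ) : Prop := y ∈ N.complexes ∧ ¬ N.IsTerminal y

/-- The set of terminal strong linkage classes. -/
def tslc : Set (Set (S → ℝ)) :=
  {L | ∃ y, N.IsTerminal y ∧ L = {y' | N.reach y y' ∧ N.reach y' y}}

/-- The number `t` of terminal strong linkage classes. -/
noncomputable def numTSLC : ℕ := Nat.card N.tslc

/-- Undirected connectivity (for linkage classes). -/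
def linked : (S → ℝ) → (S → ℝ) → Prop :=
  Relation.ReflTransGen (fun a b => (a, b) ∈ N.reactions ∨ (b, a) ∈ N.reactions)

/-- The set of linkage classes (connected components of the reaction digraph). -/
def linkageClasses : Set (Set (S → ℝ)) :=
  {L | ∃ y ∈ N.complexes, L = {y' | y' ∈ N.complexes ∧ N.linked y y'}}

/-- The number `ℓ` of linkage classes. -/
noncomputable def numLinkageClasses : ℕ := Nat.card N.linkageClasses

/-- The stoichiometric subspace `S = span{y' - y : y → y'}`. -/
def stoichSubspace : Submodule ℝ (S → ℝ) :=
  Submodule.span ℝ {v | ∃ r ∈ N.reactions, v = r.2 - r.1}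

/-- The rank `s` of the network. -/
noncomputable def rank : ℕ := Module.finrank ℝ N.stoichSubspace

/-- The deficiency `δ = n - ℓ - s`. -/
noncomputable def deficiency : ℤ :=
  (N.complexes.card : ℤ) - N.numLinkageClasses - N.rank

/-- The map of complexes `Y : ℝ^C → ℝ^S`, sending `ω_y ↦ y`. -/
noncomputable def mapY : (↥N.complexes → ℝ) →ₗ[ℝ] (S → ℝ) :=
  ∑ y : ↥N.complexes, (LinearMap.proj y).smulRight (y : S → ℝ)

/-- The incidence map `I_a : ℝ^R → ℝ^C`, sending `ω_{y→y'} ↦ ω_{y'} - ω_y`. -/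
noncomputable def incidence : (↥N.reactions → ℝ) →ₗ[ℝ] (↥N.complexes → ℝ) :=
  ∑ r : ↥N.reactions,
    (LinearMap.proj r).smulRight
      (Pi.single (⟨r.1.2, N.mem_target r.1 r.2⟩ : ↥N.complexes) 1
        - Pi.single (⟨r.1.1, N.mem_source r.1 r.2⟩ : ↥N.complexes) 1)

/-- The Laplacian map `A_k x = Σ_{y→y'} k_{y→y'} x_y (ω_{y'} - ω_y)`. -/
noncomputable def laplacian (k : ↥N.reactions → ℝ) :
    (↥N.complexes → ℝ) →ₗ[ℝ] (↥N.complexes → ℝ) :=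
  ∑ r : ↥N.reactions, k r •
    ((LinearMap.proj (⟨r.1.1, N.mem_source r.1 r.2⟩ : ↥N.complexes)).smulRight
      (Pi.single (⟨r.1.2, N.mem_target r.1 r.2⟩ : ↥N.complexes) 1
        - Pi.single (⟨r.1.1, N.mem_source r.1 r.2⟩ : ↥N.complexes) 1))

/-- A positive equilibrium of the PL-RDK system with rate constants `k` and
kinetic-order assignment (T-matrix) `T`. -/
def IsPosEquilibrium (k : ↥N.reactions → ℝ) (T : (S → ℝ) → (S → ℝ)) (c : S → ℝ) : Prop :=
  (∀ i, 0 < c i) ∧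
    ∑ r : ↥N.reactions, (k r * ∏ i, (c i) ^ (T r.1.1 i)) • ((r.1.2 : S → ℝ) - r.1.1) = 0

/-- The set of reactant complexes. -/
def reactantSet : Set (S → ℝ) := {y | ∃ y', (y, y') ∈ N.reactions}

/-- The reactant subspace `R = Im Y_res`. -/
def reactantSubspace : Submodule ℝ (S → ℝ) := Submodule.span ℝ N.reactantSet

/-- The reactant deficiency `δ_ρ = n_r - q`. -/
noncomputable def reactantDeficiency : ℤ :=
  (Nat.card N.reactantSet : ℤ) - Module.finrank ℝ N.reactantSubspace

end CRN
namespace CRNAux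

open CRN Module LinearMap

variable {S : Type*} [Fintype S] (N : CRN S)

/-! ### Source and target of a reaction as elements of the complex set -/

def src (r : ↥N.reactions) : ↥N.complexes := ⟨r.1.1, N.mem_source r.1 r.2⟩

def tgt (r : ↥N.reactions) : ↥N.complexes := ⟨r.1.2, N.mem_target r.1 r.2⟩

/-! ### Pointwise formulas for the basic linear maps -/

lemma laplacian_apply (k : ↥N.reactions → ℝ) (x : ↥N.complexes → ℝ) :
    N.laplacian k x = ∑ r : ↥N.reactions, (k r * x (src N r)) •
      (Pi.single (tgt N r) (1:ℝ) - Pi.single (src N r) 1) := by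
  simp only [CRN.laplacian, LinearMap.sum_apply, LinearMap.smul_apply,
    LinearMap.smulRight_apply, LinearMap.proj_apply, smul_smul, src, tgt]

lemma incidence_apply (v : ↥N.reactions → ℝ) :
    N.incidence v = ∑ r : ↥N.reactions, (v r) •
      (Pi.single (tgt N r) (1:ℝ) - Pi.single (src N r) 1) := by
  simp only [CRN.incidence, LinearMap.sum_apply, LinearMap.smulRight_apply,
    LinearMap.proj_apply, src, tgt]

lemma mapY_apply (x : ↥N.complexes → ℝ) :
    N.mapY x = ∑ y : ↥N.complexes, x y • (y : S → ℝ) := by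
  simp only [CRN.mapY, LinearMap.sum_apply, LinearMap.smulRight_apply, LinearMap.proj_apply]

lemma mapY_single (z : ↥N.complexes) : N.mapY (Pi.single z 1) = (z : S → ℝ) := by
  rw [mapY_apply, Finset.sum_eq_single z]
  · simp
  · intro y _ hy; simp [Pi.single_apply, hy]
  · intro h; exact absurd (Finset.mem_univ z) h

lemma incidence_single (r₀ : ↥N.reactions) :
    N.incidence (Pi.single r₀ 1) = Pi.single (tgt N r₀) (1:ℝ) - Pi.single (src N r₀) 1 := by
  rw [incidence_apply, Finset.sum_eq_single r₀]
  · simp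
  · intro r _ hr; simp [Pi.single_apply, hr]
  · intro h; exact absurd (Finset.mem_univ _) h

/-- The diagonal-type map `x ↦ (r ↦ k r * x (src r))`. -/
noncomputable def degMap (k : ↥N.reactions → ℝ) :
    (↥N.complexes → ℝ) →ₗ[ℝ] (↥N.reactions → ℝ) :=
  LinearMap.pi fun r => k r • LinearMap.proj (src N r)

lemma laplacian_eq_comp (k : ↥N.reactions → ℝ) :
    N.laplacian k = N.incidence ∘ₗ degMap N k := by
  refine LinearMap.ext fun x => ?_
  rw [LinearMap.comp_apply, laplacian_apply, incidence_apply]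
  refine Finset.sum_congr rfl fun r _ => ?_
  simp [degMap, LinearMap.pi_apply]

end CRNAux
namespace CRNAux

open CRN Module LinearMap

variable {S : Type*} [Fintype S] (N : CRN S)

/-! ### Reachability on the subtype of complexes -/

def stepC (a b : ↥N.complexes) : Prop := ((a : S → ℝ), (b : S → ℝ)) ∈ N.reactions

def reachC : ↥N.complexes → ↥N.complexes → Prop := Relation.ReflTransGen (stepC N)

def TermC (a : ↥N.complexes) : Prop := ∀ b, reachC N a b → reachC N b a

lemma stepC_src_tgt (r : ↥N.reactions) : stepC N (src N r) (tgt N r) := r.2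

lemma reach_mem {y z : S → ℝ} (h : N.reach y z) (hy : y ∈ N.complexes) : z ∈ N.complexes := by
  induction h with
  | refl => exact hy
  | tail _ hstep _ => exact N.mem_target _ hstep

lemma reachC_reach {a b : ↥N.complexes} (h : reachC N a b) : N.reach ↑a ↑b := by
  induction h with
  | refl => exact Relation.ReflTransGen.refl
  | tail _ hs ih => exact Relation.ReflTransGen.tail ih hs

lemma reach_reachC {a : ↥N.complexes} {z : S → ℝ} (h : N.reach ↑a z) :
    ∃ hz : z ∈ N.complexes, reachC N a ⟨z, hz⟩ := by
  induction h with
  | refl => exact ⟨a.2, Relation.ReflTransGen.refl⟩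
  | tail _ hstep ih =>
      obtain ⟨hb, hab⟩ := ih
      exact ⟨N.mem_target _ hstep, hab.tail hstep⟩

lemma reach_reachC' {a b : ↥N.complexes} (h : N.reach ↑a ↑b) : reachC N a b := by
  obtain ⟨hz, h1⟩ := reach_reachC N h
  exact h1

lemma isTerminal_coe {a : ↥N.complexes} (h : TermC N a) : N.IsTerminal ↑a := by
  refine ⟨a.2, fun y' hy' => ?_⟩
  obtain ⟨hz, h1⟩ := reach_reachC N hy'
  exact reachC_reach N (h _ h1)

lemma termC_of_isTerminal {a : ↥N.complexes} (h : N.IsTerminal ↑a) : TermC N a :=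
  fun b hab => reach_reachC' N (h.2 ↑b (reachC_reach N hab))

lemma exists_terminal (a : ↥N.complexes) : ∃ b, reachC N a b ∧ TermC N b := by
  have key : ∀ (n : ℕ) (a : ↥N.complexes),
      (N.complexes.attach.filter fun z => reachC N a z).card ≤ n →
      ∃ b, reachC N a b ∧ TermC N b := by
    intro n
    induction n with
    | zero =>
      intro a ha
      have hmem : a ∈ N.complexes.attach.filter fun z => reachC N a z :=
        Finset.mem_filter.2 ⟨Finset.mem_attach _ _, Relation.ReflTransGen.refl⟩
      have := Finset.card_pos.2 ⟨a, hmem⟩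
      omega
    | succ n ih =>
      intro a ha
      by_cases hT : TermC N a
      · exact ⟨a, Relation.ReflTransGen.refl, hT⟩
      · unfold TermC at hT
        push_neg at hT
        obtain ⟨b, hab, hnb⟩ := hT
        have hsub : (N.complexes.attach.filter fun z => reachC N b z) ⊆
            (N.complexes.attach.filter fun z => reachC N a z) := by
          intro z hz
          rw [Finset.mem_filter] at hz ⊢
          exact ⟨hz.1, hab.trans hz.2⟩
        have hanot : a ∉ (N.complexes.attach.filter fun z => reachC N b z) := by
          rw [Finset.mem_filter]
          rintro ⟨-, hba⟩
          exact hnb hba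
        have hamem : a ∈ N.complexes.attach.filter fun z => reachC N a z :=
          Finset.mem_filter.2 ⟨Finset.mem_attach _ _, Relation.ReflTransGen.refl⟩
        have hlt := Finset.card_lt_card ((Finset.ssubset_iff_of_subset hsub).2 ⟨a, hamem, hanot⟩)
        obtain ⟨c, hbc, hc⟩ := ih b (by omega)
        exact ⟨c, hab.trans hbc, hc⟩
  exact key _ a le_rfl

/-! ### Harmonic functions and the maximum principle -/

def Harmonic (k : ↥N.reactions → ℝ) (f : ↥N.complexes → ℝ) : Prop :=
  ∀ z, ∑ r : ↥N.reactions, (if src N r = z then k r * (f (tgt N r) - f z) else 0) = 0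

lemma Harmonic.neg {k : ↥N.reactions → ℝ} {f : ↥N.complexes → ℝ}
    (hf : Harmonic N k f) : Harmonic N k (-f) := by
  intro z
  have h : ∑ r : ↥N.reactions, (if src N r = z then k r * ((-f) (tgt N r) - (-f) z) else 0)
      = -∑ r : ↥N.reactions, (if src N r = z then k r * (f (tgt N r) - f z) else 0) := by
    rw [← Finset.sum_neg_distrib]
    refine Finset.sum_congr rfl fun r _ => ?_
    by_cases h : src N r = z <;> simp [h] <;> ring
  rw [h, hf z, neg_zero]

lemma harmonic_step_eq {k : ↥N.reactions → ℝ} {f : ↥N.complexes → ℝ}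
    (hk : ∀ r, 0 < k r) (hf : Harmonic N k f)
    (T : Set ↥N.complexes) (hT : ∀ a ∈ T, ∀ r : ↥N.reactions, src N r = a → tgt N r ∈ T)
    {a : ↥N.complexes} (ha : a ∈ T) (hmax : ∀ z ∈ T, f z ≤ f a)
    {r : ↥N.reactions} (hr : src N r = a) : f (tgt N r) = f a := by
  have h0 := hf a
  have hnonpos : ∀ r' ∈ Finset.univ,
      (if src N r' = a then k r' * (f (tgt N r') - f a) else 0) ≤ 0 := by
    intro r' _
    by_cases h : src N r' = a
    · rw [if_pos h]
      have htgtT : tgt N r' ∈ T := hT a ha r' h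
      exact mul_nonpos_iff.2 (Or.inl ⟨(hk r').le, sub_nonpos.2 (hmax _ htgtT)⟩)
    · rw [if_neg h]
  have hall := (Finset.sum_eq_zero_iff_of_nonpos hnonpos).1 h0 r (Finset.mem_univ r)
  rw [if_pos hr] at hall
  rcases mul_eq_zero.1 hall with h | h
  · exact absurd h (hk r).ne'
  · exact sub_eq_zero.1 h

lemma harmonic_reach_eq {k : ↥N.reactions → ℝ} {f : ↥N.complexes → ℝ}
    (hk : ∀ r, 0 < k r) (hf : Harmonic N k f)
    (T : Set ↥N.complexes) (hT : ∀ a ∈ T, ∀ r : ↥N.reactions, src N r = a → tgt N r ∈ T)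
    {a : ↥N.complexes} (ha : a ∈ T) (hmax : ∀ z ∈ T, f z ≤ f a)
    {b : ↥N.complexes} (hab : reachC N a b) : b ∈ T ∧ f b = f a := by
  induction hab with
  | refl => exact ⟨ha, rfl⟩
  | @tail c d hac hstep ih =>
      obtain ⟨hcT, hfc⟩ := ih
      have hrmem : ((c : S → ℝ), (d : S → ℝ)) ∈ N.reactions := hstep
      set r : ↥N.reactions := ⟨(↑c, ↑d), hrmem⟩ with hrdef
      have hsrc : src N r = c := Subtype.ext rfl
      have htgt : tgt N r = d := Subtype.ext rfl
      have hdT : d ∈ T := htgt ▸ hT c hcT r hsrc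
      refine ⟨hdT, ?_⟩
      have hstep' := harmonic_step_eq N hk hf T hT hcT
        (fun z hz => le_of_le_of_eq (hmax z hz) hfc.symm) hsrc
      rw [htgt] at hstep'
      rw [hstep', hfc]

lemma harmonic_terminal_const {k : ↥N.reactions → ℝ} {f : ↥N.complexes → ℝ}
    (hk : ∀ r, 0 < k r) (hf : Harmonic N k f)
    {a b : ↥N.complexes} (ha : TermC N a) (hab : reachC N a b) : f b = f a := by
  set T : Set ↥N.complexes := {z | reachC N a z} with hTdef
  have hclosed : ∀ c ∈ T, ∀ r : ↥N.reactions, src N r = c → tgt N r ∈ T := by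
    intro c hc r hr
    exact Relation.ReflTransGen.tail hc (hr ▸ stepC_src_tgt N r)
  have hTne : (N.complexes.attach.filter fun z => z ∈ T).Nonempty :=
    ⟨a, Finset.mem_filter.2 ⟨Finset.mem_attach _ _, Relation.ReflTransGen.refl⟩⟩
  obtain ⟨z₀, hz₀mem, hz₀max⟩ := Finset.exists_max_image _ f hTne
  have hz₀T : z₀ ∈ T := (Finset.mem_filter.1 hz₀mem).2
  have hmax : ∀ z ∈ T, f z ≤ f z₀ := fun z hz =>
    hz₀max z (Finset.mem_filter.2 ⟨Finset.mem_attach _ _, hz⟩)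
  have hz₀a : reachC N z₀ a := ha z₀ hz₀T
  have hfa : f a = f z₀ := (harmonic_reach_eq N hk hf T hclosed hz₀T hmax hz₀a).2
  have hfb : f b = f z₀ := (harmonic_reach_eq N hk hf T hclosed hz₀T hmax (hz₀a.trans hab)).2
  rw [hfa, hfb]

lemma harmonic_eq_zero {k : ↥N.reactions → ℝ} {f : ↥N.complexes → ℝ}
    (hk : ∀ r, 0 < k r) (hf : Harmonic N k f)
    (h0 : ∀ b, TermC N b → f b = 0) : f = 0 := by
  funext a
  have hne : Nonempty ↥N.complexes := ⟨a⟩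
  have hle : ∀ (g : ↥N.complexes → ℝ), Harmonic N k g → (∀ b, TermC N b → g b = 0) →
      g a ≤ 0 := by
    intro g hg hg0
    obtain ⟨y₀, hy₀⟩ := Finite.exists_max g
    obtain ⟨b, hb, hbT⟩ := exists_terminal N y₀
    have hgb : g b = g y₀ :=
      (harmonic_reach_eq N hk hg Set.univ (fun _ _ _ _ => Set.mem_univ _)
        (Set.mem_univ y₀) (fun z _ => hy₀ z) hb).2
    have := hg0 b hbT
    have := hy₀ a
    linarith
  have h1 := hle f hf h0
  have h2 := hle (-f) (Harmonic.neg N hf) (fun b hb => by simp [h0 b hb])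
  simp only [Pi.neg_apply, neg_nonpos] at h2
  simp only [Pi.zero_apply]
  linarith

end CRNAux
namespace CRNAux

open CRN Module LinearMap

variable {S : Type*} [Fintype S] (N : CRN S)

/-! ### The transpose (harmonic) operator -/

noncomputable def harmOp (k : ↥N.reactions → ℝ) :
    (↥N.complexes → ℝ) →ₗ[ℝ] (↥N.complexes → ℝ) :=
  ∑ r : ↥N.reactions, k r •
    (((LinearMap.proj (tgt N r) : (↥N.complexes → ℝ) →ₗ[ℝ] ℝ)
        - (LinearMap.proj (src N r) : (↥N.complexes → ℝ) →ₗ[ℝ] ℝ)).smulRight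
      (Pi.single (src N r) (1:ℝ)))

lemma harmOp_apply (k : ↥N.reactions → ℝ) (f : ↥N.complexes → ℝ) (z : ↥N.complexes) :
    harmOp N k f z
      = ∑ r : ↥N.reactions, (if src N r = z then k r * (f (tgt N r) - f z) else 0) := by
  simp only [harmOp, LinearMap.sum_apply, Finset.sum_apply, LinearMap.smul_apply,
    Pi.smul_apply, LinearMap.smulRight_apply, LinearMap.sub_apply, LinearMap.proj_apply,
    smul_eq_mul, Pi.single_apply]
  refine Finset.sum_congr rfl fun r _ => ?_
  rcases eq_or_ne (src N r) z with h | h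
  · rw [if_pos h, if_pos h.symm, h, mul_one]
  · rw [if_neg h, if_neg (Ne.symm h), mul_zero, mul_zero]

lemma toMatrix'_harmOp (k : ↥N.reactions → ℝ) :
    LinearMap.toMatrix' (harmOp N k) = (LinearMap.toMatrix' (N.laplacian k)).transpose := by
  ext i j
  rw [Matrix.transpose_apply, LinearMap.toMatrix'_apply, LinearMap.toMatrix'_apply,
    harmOp_apply, laplacian_apply]
  have e : ∀ a b : ↥N.complexes, (if a = b then (1:ℝ) else 0) = if b = a then 1 else 0 := by
    intro a b
    rcases eq_or_ne a b with h | h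
    · subst h; rfl
    · rw [if_neg h, if_neg (Ne.symm h)]
  simp only [Finset.sum_apply, Pi.smul_apply, Pi.sub_apply, Pi.single_apply, smul_eq_mul]
  refine Finset.sum_congr rfl fun r _ => ?_
  rw [e j (tgt N r), e j (src N r)]
  by_cases h1 : src N r = i
  · subst h1
    rw [if_pos rfl, if_pos rfl, mul_one]
  · rw [if_neg h1, if_neg h1, mul_zero, zero_mul]

lemma finrank_ker_harmOp_eq (k : ↥N.reactions → ℝ) :
    finrank ℝ ↥(LinearMap.ker (harmOp N k))
      = finrank ℝ ↥(LinearMap.ker (N.laplacian k)) := by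
  have hmv : ∀ (g : (↥N.complexes → ℝ) →ₗ[ℝ] (↥N.complexes → ℝ)),
      (LinearMap.toMatrix' g).mulVecLin = g := by
    intro g
    have h1 : Matrix.toLin' (LinearMap.toMatrix' g) = g := Matrix.toLin'_toMatrix' g
    refine LinearMap.ext fun x => ?_
    rw [Matrix.mulVecLin_apply, ← Matrix.toLin'_apply, h1]
  have hrank : ∀ (g : (↥N.complexes → ℝ) →ₗ[ℝ] (↥N.complexes → ℝ)),
      finrank ℝ ↥(LinearMap.range g) = (LinearMap.toMatrix' g).rank := by
    intro g
    rw [Matrix.rank, hmv g]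
  have hA := LinearMap.finrank_range_add_finrank_ker (N.laplacian k)
  have hB := LinearMap.finrank_range_add_finrank_ker (harmOp N k)
  rw [hrank] at hA hB
  rw [toMatrix'_harmOp, Matrix.rank_transpose] at hB
  omega

/-! ### Terminal strong linkage classes -/

lemma tslc_subset {L : Set (S → ℝ)} (hL : L ∈ N.tslc) : L ⊆ ↑N.complexes := by
  obtain ⟨y, hy, rfl⟩ := hL
  intro z hz
  exact reach_mem N hz.1 hy.1

lemma tslc_finite : N.tslc.Finite :=
  Set.Finite.subset N.complexes.finite_toSet.finite_subsets fun _ hL => tslc_subset N hL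

lemma repT_exists (L : ↥N.tslc) : ∃ y : ↥N.complexes, TermC N y ∧
    (L : Set (S → ℝ)) = {y' | N.reach ↑y y' ∧ N.reach y' ↑y} := by
  obtain ⟨y, hy, hL⟩ := L.2
  exact ⟨⟨y, hy.1⟩, termC_of_isTerminal N hy, hL⟩

noncomputable def repT (L : ↥N.tslc) : ↥N.complexes := (repT_exists N L).choose

lemma repT_term (L : ↥N.tslc) : TermC N (repT N L) := (repT_exists N L).choose_spec.1

lemma repT_setEq (L : ↥N.tslc) :
    (L : Set (S → ℝ)) = {y' | N.reach ↑(repT N L) y' ∧ N.reach y' ↑(repT N L)} :=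
  (repT_exists N L).choose_spec.2

lemma f_eq_at_terminal {k : ↥N.reactions → ℝ} {f : ↥N.complexes → ℝ}
    (hk : ∀ r, 0 < k r) (hf : Harmonic N k f)
    {b : ↥N.complexes} (hb : TermC N b)
    (h0 : ∀ L : ↥N.tslc, f (repT N L) = 0) : f b = 0 := by
  set Lset : Set (S → ℝ) := {y' | N.reach ↑b y' ∧ N.reach y' ↑b} with hLdef
  have hL : Lset ∈ N.tslc := ⟨↑b, isTerminal_coe N hb, rfl⟩
  set L : ↥N.tslc := ⟨Lset, hL⟩ with hLdef2
  have hbL : (↑b : S → ℝ) ∈ Lset := ⟨Relation.ReflTransGen.refl, Relation.ReflTransGen.refl⟩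
  have hset := repT_setEq N L
  have hbL' : (↑b : S → ℝ) ∈ {y' | N.reach ↑(repT N L) y' ∧ N.reach y' ↑(repT N L)} := by
    rw [← hset]; exact hbL
  have hrc : reachC N (repT N L) b := reach_reachC' N hbL'.1
  have := harmonic_terminal_const N hk hf (repT_term N L) hrc
  rw [this, h0 L]

lemma finrank_ker_lap_le (k : ↥N.reactions → ℝ) (hk : ∀ r, 0 < k r) :
    finrank ℝ ↥(LinearMap.ker (N.laplacian k)) ≤ N.numTSLC := by
  rw [← finrank_ker_harmOp_eq N k]
  haveI : Finite ↥N.tslc := (tslc_finite N).to_subtype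
  haveI := Fintype.ofFinite ↥N.tslc
  set Φ : ↥(LinearMap.ker (harmOp N k)) →ₗ[ℝ] (↥N.tslc → ℝ) :=
    LinearMap.pi fun L => LinearMap.proj (repT N L) ∘ₗ (LinearMap.ker (harmOp N k)).subtype
    with hΦdef
  have hinj : Function.Injective Φ := by
    rw [← LinearMap.ker_eq_bot, LinearMap.ker_eq_bot']
    intro f hf
    have hharm : Harmonic N k (f : ↥N.complexes → ℝ) := by
      intro z
      rw [← harmOp_apply]
      have h2 : harmOp N k (f : ↥N.complexes → ℝ) = 0 := f.2
      rw [h2]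
      rfl
    have h0 : ∀ L : ↥N.tslc, (f : ↥N.complexes → ℝ) (repT N L) = 0 := by
      intro L
      have := congrFun hf L
      simpa [hΦdef, LinearMap.pi_apply] using this
    have hterm : ∀ b, TermC N b → (f : ↥N.complexes → ℝ) b = 0 := fun b hb =>
      f_eq_at_terminal N hk hharm hb h0
    exact Subtype.ext (harmonic_eq_zero N hk hharm hterm)
  calc finrank ℝ ↥(LinearMap.ker (harmOp N k))
      ≤ finrank ℝ (↥N.tslc → ℝ) := LinearMap.finrank_le_finrank_of_injective hinj
    _ = Fintype.card ↥N.tslc := Module.finrank_fintype_fun_eq_card ℝ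
    _ = N.numTSLC := (Nat.card_eq_fintype_card).symm

end CRNAux
namespace CRNAux

open CRN Module LinearMap

variable {S : Type*} [Fintype S] (N : CRN S)

/-! ### Linkage classes -/

lemma linked_symm : Symmetric N.linked :=
  fun _ _ h => by
    unfold CRN.linked at h ⊢
    induction h with
    | refl => exact Relation.ReflTransGen.refl
    | tail _ hs ih => exact Relation.ReflTransGen.head (Or.symm hs) ih

lemma linkage_subset {L : Set (S → ℝ)} (hL : L ∈ N.linkageClasses) : L ⊆ ↑N.complexes := by
  obtain ⟨y, hy, rfl⟩ := hL
  intro z hz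
  exact hz.1

lemma linkage_finite : N.linkageClasses.Finite :=
  Set.Finite.subset N.complexes.finite_toSet.finite_subsets fun _ hL => linkage_subset N hL

lemma repL_exists (L : ↥N.linkageClasses) : ∃ y : ↥N.complexes,
    (L : Set (S → ℝ)) = {y' | y' ∈ N.complexes ∧ N.linked ↑y y'} := by
  obtain ⟨y, hy, hL⟩ := L.2
  exact ⟨⟨y, hy⟩, hL⟩

noncomputable def repL (L : ↥N.linkageClasses) : ↥N.complexes := (repL_exists N L).choose

lemma repL_setEq (L : ↥N.linkageClasses) :
    (L : Set (S → ℝ)) = {y' | y' ∈ N.complexes ∧ N.linked ↑(repL N L) y'} :=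
  (repL_exists N L).choose_spec

lemma repL_mem (L : ↥N.linkageClasses) : ↑(repL N L) ∈ (L : Set (S → ℝ)) := by
  rw [repL_setEq]
  exact ⟨(repL N L).2, Relation.ReflTransGen.refl⟩

lemma mem_linkage_iff (L : ↥N.linkageClasses) (z : ↥N.complexes) :
    (↑z : S → ℝ) ∈ (L : Set (S → ℝ)) ↔ N.linked ↑(repL N L) ↑z := by
  rw [repL_setEq]
  exact ⟨fun h => h.2, fun h => ⟨z.2, h⟩⟩

lemma tgt_mem_iff_src_mem (L : ↥N.linkageClasses) (r : ↥N.reactions) :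
    ((tgt N r : S → ℝ) ∈ (L : Set (S → ℝ))) ↔ ((src N r : S → ℝ) ∈ (L : Set (S → ℝ))) := by
  rw [mem_linkage_iff, mem_linkage_iff]
  have hst : N.linked ↑(src N r) ↑(tgt N r) := Relation.ReflTransGen.single (Or.inl r.2)
  exact ⟨fun h => h.trans (linked_symm N hst), fun h => h.trans hst⟩

lemma linkage_eq_of_mem {L L' : ↥N.linkageClasses} {x : S → ℝ}
    (h : x ∈ (L : Set (S → ℝ))) (h' : x ∈ (L' : Set (S → ℝ))) : L = L' := by
  rw [repL_setEq] at h h'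
  have hLL' : N.linked ↑(repL N L') ↑(repL N L) := h'.2.trans (linked_symm N h.2)
  apply Subtype.ext
  rw [repL_setEq N L, repL_setEq N L']
  ext z
  exact ⟨fun hz => ⟨hz.1, hLL'.trans hz.2⟩,
    fun hz => ⟨hz.1, ((linked_symm N hLL').trans hz.2 : _)⟩⟩

/-- The map sending `x` to its sums over each linkage class. -/
noncomputable def psiMap : (↥N.complexes → ℝ) →ₗ[ℝ] (↥N.linkageClasses → ℝ) :=
  LinearMap.pi fun L => ∑ y : ↥N.complexes,
    (if (↑y : S → ℝ) ∈ (L : Set (S → ℝ)) then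
      (LinearMap.proj y : (↥N.complexes → ℝ) →ₗ[ℝ] ℝ) else 0)

lemma psiMap_apply (x : ↥N.complexes → ℝ) (L : ↥N.linkageClasses) :
    psiMap N x L = ∑ y : ↥N.complexes, (if (↑y : S → ℝ) ∈ (L : Set (S → ℝ)) then x y else 0) := by
  simp only [psiMap, LinearMap.pi_apply, LinearMap.sum_apply]
  refine Finset.sum_congr rfl fun y _ => ?_
  by_cases h : (↑y : S → ℝ) ∈ (L : Set (S → ℝ)) <;> simp [h]

lemma psi_single (z : ↥N.complexes) (L : ↥N.linkageClasses) :
    psiMap N (Pi.single z 1) L = if (↑z : S → ℝ) ∈ (L : Set (S → ℝ)) then 1 else 0 := by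
  rw [psiMap_apply, Finset.sum_eq_single z]
  · simp [Pi.single_eq_same]
  · intro y _ hy; simp [Pi.single_apply, hy]
  · intro h; exact absurd (Finset.mem_univ _) h

lemma psi_comp_incidence : psiMap N ∘ₗ N.incidence = 0 := by
  refine LinearMap.pi_ext fun r x => ?_
  have hx : (Pi.single r x : ↥N.reactions → ℝ) = x • (Pi.single r 1 : ↥N.reactions → ℝ) := by
    rw [← Pi.single_smul, smul_eq_mul, mul_one]
  rw [hx, map_smul, map_smul]
  rw [LinearMap.comp_apply, incidence_single, map_sub]
  funext L
  simp only [Pi.smul_apply, Pi.sub_apply, LinearMap.zero_apply, Pi.zero_apply, smul_eq_mul]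
  rw [psi_single, psi_single]
  rw [if_congr (tgt_mem_iff_src_mem N L r) rfl rfl]
  ring

lemma incidence_range_le_ker_psi :
    LinearMap.range N.incidence ≤ LinearMap.ker (psiMap N) := by
  rintro _ ⟨v, rfl⟩
  rw [LinearMap.mem_ker, ← LinearMap.comp_apply, psi_comp_incidence, LinearMap.zero_apply]

lemma psi_surjective : Function.Surjective (psiMap N) := by
  haveI : Finite ↥N.linkageClasses := (linkage_finite N).to_subtype
  haveI := Fintype.ofFinite ↥N.linkageClasses
  intro g
  refine ⟨∑ L : ↥N.linkageClasses, g L • (Pi.single (repL N L) 1 : ↥N.complexes → ℝ), ?_⟩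
  funext L'
  rw [map_sum]
  rw [Finset.sum_apply]
  rw [Finset.sum_eq_single L']
  · rw [map_smul, Pi.smul_apply, psi_single, if_pos (repL_mem N L'), smul_eq_mul, mul_one]
  · intro L _ hL
    rw [map_smul, Pi.smul_apply, psi_single, smul_eq_mul]
    rw [if_neg, mul_zero]
    intro hmem
    exact hL (linkage_eq_of_mem N (repL_mem N L) hmem)
  · intro h; exact absurd (Finset.mem_univ _) h

lemma finrank_range_incidence_le :
    finrank ℝ ↥(LinearMap.range N.incidence) + N.numLinkageClasses ≤ N.complexes.card := by
  haveI : Finite ↥N.linkageClasses := (linkage_finite N).to_subtype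
  haveI := Fintype.ofFinite ↥N.linkageClasses
  have h := LinearMap.finrank_range_add_finrank_ker (psiMap N)
  have hr : LinearMap.range (psiMap N) = ⊤ := LinearMap.range_eq_top.2 (psi_surjective N)
  rw [hr, finrank_top] at h
  have h1 : finrank ℝ (↥N.linkageClasses → ℝ) = N.numLinkageClasses := by
    rw [Module.finrank_fintype_fun_eq_card, CRN.numLinkageClasses, Nat.card_eq_fintype_card]
  have h2 : finrank ℝ (↥N.complexes → ℝ) = N.complexes.card := by
    rw [Module.finrank_fintype_fun_eq_card, Fintype.card_coe]
  have h3 : finrank ℝ ↥(LinearMap.range N.incidence) ≤ finrank ℝ ↥(LinearMap.ker (psiMap N)) :=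
    Submodule.finrank_mono (incidence_range_le_ker_psi N)
  omega

/-! ### General linear algebra lemmas -/

lemma finrank_ker_comp_le {V W U : Type*} [AddCommGroup V] [Module ℝ V]
    [AddCommGroup W] [Module ℝ W] [AddCommGroup U] [Module ℝ U]
    [FiniteDimensional ℝ V] [FiniteDimensional ℝ W]
    (f : W →ₗ[ℝ] U) (g : V →ₗ[ℝ] W) :
    finrank ℝ ↥(LinearMap.ker (f ∘ₗ g)) ≤
      finrank ℝ ↥(LinearMap.ker g) +
        finrank ℝ ↥(LinearMap.ker f ⊓ LinearMap.range g) := by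
  have hmem : ∀ x : ↥(LinearMap.ker (f ∘ₗ g)),
      g ↑x ∈ LinearMap.ker f ⊓ LinearMap.range g := by
    intro x
    refine ⟨?_, ⟨↑x, rfl⟩⟩
    have := x.2
    rw [LinearMap.mem_ker, LinearMap.comp_apply] at this
    exact this
  set φ : ↥(LinearMap.ker (f ∘ₗ g)) →ₗ[ℝ] ↥(LinearMap.ker f ⊓ LinearMap.range g) :=
    LinearMap.codRestrict _ (g ∘ₗ (LinearMap.ker (f ∘ₗ g)).subtype) hmem with hφ
  have h1 := LinearMap.finrank_range_add_finrank_ker φ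
  have h2 : finrank ℝ ↥(LinearMap.range φ)
      ≤ finrank ℝ ↥(LinearMap.ker f ⊓ LinearMap.range g) := Submodule.finrank_le _
  have h3 : finrank ℝ ↥(LinearMap.ker φ) = finrank ℝ ↥(LinearMap.ker g) := by
    have hkφ : LinearMap.ker φ
        = Submodule.comap (LinearMap.ker (f ∘ₗ g)).subtype (LinearMap.ker g) := by
      ext x
      rw [LinearMap.mem_ker, Submodule.mem_comap, LinearMap.mem_ker]
      exact ⟨fun h => congrArg Subtype.val h, fun h => Subtype.ext h⟩
    rw [hkφ]
    have hle : LinearMap.ker g ≤ LinearMap.ker (f ∘ₗ g) := by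
      intro x hx
      rw [LinearMap.mem_ker] at hx ⊢
      rw [LinearMap.comp_apply, hx, map_zero]
    have e1 : Submodule.comap (LinearMap.ker (f ∘ₗ g)).subtype (LinearMap.ker g)
        = Submodule.comap (LinearMap.ker (f ∘ₗ g)).subtype
            (LinearMap.ker g ⊓ LinearMap.ker (f ∘ₗ g)) := by
      rw [Submodule.comap_inf, Submodule.comap_subtype_self, inf_top_eq]
    rw [e1, (Submodule.comapSubtypeEquivOfLe
      (inf_le_right : LinearMap.ker g ⊓ LinearMap.ker (f ∘ₗ g) ≤ _)).finrank_eq]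
    rw [inf_eq_left.2 hle]
  omega

lemma finrank_inf_add {V W : Type*} [AddCommGroup V] [Module ℝ V]
    [AddCommGroup W] [Module ℝ W] [FiniteDimensional ℝ V]
    (f : V →ₗ[ℝ] W) (p : Submodule ℝ V) :
    finrank ℝ ↥(LinearMap.ker f ⊓ p) + finrank ℝ ↥(Submodule.map f p)
      = finrank ℝ ↥p := by
  have h := LinearMap.finrank_range_add_finrank_ker (f ∘ₗ p.subtype)
  rw [LinearMap.range_comp, Submodule.range_subtype, LinearMap.ker_comp] at h
  have e1 : Submodule.comap p.subtype (LinearMap.ker f)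
      = Submodule.comap p.subtype (LinearMap.ker f ⊓ p) := by
    rw [Submodule.comap_inf, Submodule.comap_subtype_self, inf_top_eq]
  rw [e1, (Submodule.comapSubtypeEquivOfLe
    (inf_le_right : LinearMap.ker f ⊓ p ≤ p)).finrank_eq] at h
  omega

/-! ### The stoichiometric subspace -/

lemma range_mapY_comp_incidence :
    LinearMap.range (N.mapY ∘ₗ N.incidence) = N.stoichSubspace := by
  apply le_antisymm
  · rintro _ ⟨v, rfl⟩
    rw [LinearMap.comp_apply, incidence_apply, map_sum]
    apply Submodule.sum_mem
    intro r _
    rw [map_smul, map_sub, mapY_single, mapY_single]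
    exact Submodule.smul_mem _ _ (Submodule.subset_span ⟨r.1, r.2, rfl⟩)
  · rw [CRN.stoichSubspace, Submodule.span_le]
    rintro v ⟨r, hr, rfl⟩
    refine ⟨Pi.single (⟨r, hr⟩ : ↥N.reactions) 1, ?_⟩
    rw [LinearMap.comp_apply, incidence_single, map_sub, mapY_single, mapY_single]
    rfl

end CRNAux

/-- For a CRN with deficiency `δ` and `t` terminal strong linkage classes,
`dim Ker (Y ∘ A_k) ≤ δ + t` for every positive rate vector `k`. -/
theorem dim_ker_YAk_le {S : Type*} [Fintype S] (N : CRN S)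
    (k : ↥N.reactions → ℝ) (hk : ∀ r, 0 < k r) :
    (Module.finrank ℝ ↥(LinearMap.ker (N.mapY ∘ₗ N.laplacian k)) : ℤ) ≤
      N.deficiency + N.numTSLC := by
  classical
  have h1 := CRNAux.finrank_ker_comp_le N.mapY (N.laplacian k)
  have h2 := CRNAux.finrank_ker_lap_le N k hk
  have h3 : LinearMap.range (N.laplacian k) ≤ LinearMap.range N.incidence := by
    rw [CRNAux.laplacian_eq_comp N k]
    exact LinearMap.range_comp_le_range _ _
  have h4 : Module.finrank ℝ ↥(LinearMap.ker N.mapY ⊓ LinearMap.range (N.laplacian k))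
      ≤ Module.finrank ℝ ↥(LinearMap.ker N.mapY ⊓ LinearMap.range N.incidence) :=
    Submodule.finrank_mono (inf_le_inf_left _ h3)
  have h5 := CRNAux.finrank_inf_add N.mapY (LinearMap.range N.incidence)
  have h5' : Submodule.map N.mapY (LinearMap.range N.incidence) = N.stoichSubspace := by
    rw [← LinearMap.range_comp, CRNAux.range_mapY_comp_incidence]
  rw [h5'] at h5
  have h6 := CRNAux.finrank_range_incidence_le N
  have hrank : Module.finrank ℝ ↥N.stoichSubspace = N.rank := rfl
  rw [hrank] at h5
  rw [CRN.deficiency]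
  push_cast
  omega
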